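/- Let A be a unital C*-algebra, τ a continuous linear functional that is tracial, positive, and faithful, and ∂₁, ∂₂, ∂₃, ∂₄ continuous ℂ-linear τ-invariant derivations with ∂ᵢ(x*) = −(∂ᵢ(x))*. For self-adjoint f ∈ A define: R₁₂₁₂ := −½∂₁((∂₁e^f)e^{−f})e^f − ½∂₂((∂₂e^f)e^{−f})e^f − ¼(∂₃e^f)(∂₃e^f) − ¼(∂₄e^f)(∂₄e^f); R₁₃₁₃ := −½∂₃(∂₃(e^f)) + ¼(∂₃e^f)e^{−f}(∂₃e^f); R₁₄₁₄ := −½∂₄(∂₄(e^f)) + ¼(∂₄e^f)e^{−f}(∂₄e^f); R₃₁₃₁ := −½∂₃((∂₃e^f)e^{−f})e^f − ¼(∂₃e^f)e^{−f}(∂₃e^f); R₄₁₄₁ := −½∂₄((∂₄e^f)e^{−f})e^f − ¼(∂₄e^f)e^{−f}(∂₄e^f). Then the Einstein–Hilbert action EH := 2·τ( e^{−f}R₁₂₁₂ + R₁₄₁₄ + R₁₃₁₃ + R₃₁₃₁ + R₄₁₄₁ ) satisfies EH = ½ τ( (∂₃e^f)e^{−f}(∂₃e^f) + (∂₄e^f)e^{−f}(∂₄e^f)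 ), and EH is a nonpositive real number. -/

import Mathlib

open NormedSpace ComplexOrder

/-- **Non-positivity of the Einstein–Hilbert action for the non-conformal diagonal metric
`diag(e^f, e^f, 1, 1)` on the noncommutative 4-torus.**  With the Riemann tensor
components `R₁₂₁₂, R₁₃₁₃, R₁₄₁₄, R₃₁₃₁, R₄₁₄₁` computed from the Levi-Civita connection,
the Einstein–Hilbert action `EH = 2τ(e^{−f}R₁₂₁₂ + R₁₄₁₄ + R₁₃₁₃ + R₃₁₃₁ + R₄₁₄₁)`
equals `½τ((∂₃e^f)e^{−f}(∂₃e^f) + (∂₄e^f)e^{−f}(∂₄e^f))` and is a nonpositive real. -/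
theorem stmt_3 {A : Type*} [NormedRing A] [StarRing A] [CStarRing A]
    [NormedAlgebra ℂ A] [CompleteSpace A] [StarModule ℂ A]
    (τ : A →L[ℂ] ℂ) (hτ : ∀ x y : A, τ (x * y) = τ (y * x))
    (hpos : ∀ x : A, 0 ≤ τ (star x * x))
    (hfaithful : ∀ x : A, τ (star x * x) = 0 → x = 0)
    (D₁ D₂ D₃ D₄ : A →L[ℂ] A)
    (hD₁ : ∀ x y : A, D₁ (x * y) = D₁ x * y + x * D₁ y)
    (hD₂ : ∀ x y : A, D₂ (x * y) = D₂ x * y + x * D₂ y)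
    (hD₃ : ∀ x y : A, D₃ (x * y) = D₃ x * y + x * D₃ y)
    (hD₄ : ∀ x y : A, D₄ (x * y) = D₄ x * y + x * D₄ y)
    (hτD₁ : ∀ x : A, τ (D₁ x) = 0) (hτD₂ : ∀ x : A, τ (D₂ x) = 0)
    (hτD₃ : ∀ x : A, τ (D₃ x) = 0) (hτD₄ : ∀ x : A, τ (D₄ x) = 0)
    (hD₁star : ∀ x : A, D₁ (star x) = - star (D₁ x))
    (hD₂star : ∀ x : A, D₂ (star x) = - star (D₂ x))
    (hD₃star : ∀ x : A, D₃ (star x) = - star (D₃ x))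
    (hD₄star : ∀ x : A, D₄ (star x) = - star (D₄ x))
    (f : A) (hf : IsSelfAdjoint f) :
    let R₁₂₁₂ : A := -(1/2 : ℂ) • (D₁ (D₁ (exp f) * exp (-f)) * exp f)
      - (1/2 : ℂ) • (D₂ (D₂ (exp f) * exp (-f)) * exp f)
      - (1/4 : ℂ) • (D₃ (exp f) * D₃ (exp f))
      - (1/4 : ℂ) • (D₄ (exp f) * D₄ (exp f))
    let R₁₃₁₃ : A := -(1/2 : ℂ) • D₃ (D₃ (exp f))
      + (1/4 : ℂ) • (D₃ (exp f) * exp (-f) * D₃ (exp f))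
    let R₁₄₁₄ : A := -(1/2 : ℂ) • D₄ (D₄ (exp f))
      + (1/4 : ℂ) • (D₄ (exp f) * exp (-f) * D₄ (exp f))
    let R₃₁₃₁ : A := -(1/2 : ℂ) • (D₃ (D₃ (exp f) * exp (-f)) * exp f)
      - (1/4 : ℂ) • (D₃ (exp f) * exp (-f) * D₃ (exp f))
    let R₄₁₄₁ : A := -(1/2 : ℂ) • (D₄ (D₄ (exp f) * exp (-f)) * exp f)
      - (1/4 : ℂ) • (D₄ (exp f) * exp (-f) * D₄ (exp f))
    let EH : ℂ := 2 * τ (exp (-f) * R₁₂₁₂ + R₁₄₁₄ + R₁₃₁₃ + R₃₁₃₁ + R₄₁₄₁)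
    EH = (1/2 : ℂ) * τ (D₃ (exp f) * exp (-f) * D₃ (exp f)
          + D₄ (exp f) * exp (-f) * D₄ (exp f)) ∧
    EH ≤ 0 := by

  intro R₁₂₁₂ R₁₃₁₃ R₁₄₁₄ R₃₁₃₁ R₄₁₄₁ EH
  let +nondep : NormedAlgebra ℚ A := .restrictScalars ℚ ℂ A
  have hEF : exp f * exp (-f) = 1 := by
    rw [← exp_add_of_commute (Commute.refl f).neg_right, add_neg_cancel, exp_zero]
  have hEstar : star (exp f) = exp f := by rw [star_exp, hf.star_eq]
  -- integration by parts
  have ibp : ∀ (D : A →L[ℂ] A), (∀ x y : A, D (x*y) = D x * y + x * D y) →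
      (∀ x : A, τ (D x) = 0) → ∀ x y : A, τ (D x * y) = - τ (x * D y) := by
    intro D hD hτD x y
    have h := hτD (x * y)
    rw [hD, map_add] at h
    linear_combination h
  have skew : ∀ (D : A →L[ℂ] A), (∀ x : A, D (star x) = -star (D x)) →
      star (D (exp f)) = - D (exp f) := by
    intro D hD
    have h := congrArg star (hD (exp f))
    rw [hEstar, star_neg, star_star] at h
    exact h
  -- the key positivity lemma
  have nonpos : ∀ a : A, star a = -a → τ (a * exp (-f) * a) ≤ 0 := by
    intro a ha
    have hgg : exp (-((1/2:ℂ) • f)) * exp (-((1/2:ℂ) • f)) = exp (-f) := by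
      rw [← exp_add_of_commute (Commute.refl _)]
      congr 1
      module
    set g := exp (-((1/2:ℂ) • f)) with hg
    have hgstar : star g = g := by
      rw [hg, star_exp]
      congr 1
      rw [star_neg, star_smul, hf.star_eq]
      norm_num
    have hsg : star (a * g) = -(g * a) := by
      rw [star_mul, hgstar, ha, mul_neg]
    have key : τ (a * exp (-f) * a) = - τ (star (a * g) * (a * g)) := by
      rw [hsg, neg_mul, map_neg, neg_neg, ← hgg,
        show a * (g * g) * a = (a * g) * (g * a) by simp only [mul_assoc], hτ]
    rw [key]
    exact neg_nonpos.mpr (hpos _)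
  -- zero and trace-swap identities
  have z1 : τ (exp (-f) * (D₁ (D₁ (exp f) * exp (-f)) * exp f)) = 0 := by
    rw [hτ, mul_assoc, hEF, mul_one, hτD₁]
  have z2 : τ (exp (-f) * (D₂ (D₂ (exp f) * exp (-f)) * exp f)) = 0 := by
    rw [hτ, mul_assoc, hEF, mul_one, hτD₂]
  have z3 : τ (exp (-f) * (D₃ (exp f) * D₃ (exp f)))
      = τ (D₃ (exp f) * exp (-f) * D₃ (exp f)) := by
    rw [hτ, mul_assoc, hτ]
  have z4 : τ (exp (-f) * (D₄ (exp f) * D₄ (exp f)))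
      = τ (D₄ (exp f) * exp (-f) * D₄ (exp f)) := by
    rw [hτ, mul_assoc, hτ]
  have z5 : τ (D₃ (D₃ (exp f))) = 0 := hτD₃ _
  have z6 : τ (D₄ (D₄ (exp f))) = 0 := hτD₄ _
  have z7 : τ (D₃ (D₃ (exp f) * exp (-f)) * exp f)
      = - τ (D₃ (exp f) * exp (-f) * D₃ (exp f)) := by
    rw [ibp D₃ hD₃ hτD₃, mul_assoc]
  have z8 : τ (D₄ (D₄ (exp f) * exp (-f)) * exp f)
      = - τ (D₄ (exp f) * exp (-f) * D₄ (exp f)) := by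
    rw [ibp D₄ hD₄ hτD₄, mul_assoc]
  have heq : EH = (1/2 : ℂ) * τ (D₃ (exp f) * exp (-f) * D₃ (exp f)
      + D₄ (exp f) * exp (-f) * D₄ (exp f)) := by
    simp only [EH, R₁₂₁₂, R₁₃₁₃, R₁₄₁₄, R₃₁₃₁, R₄₁₄₁]
    simp only [mul_sub, mul_add, mul_neg, mul_smul_comm, neg_smul, map_add, map_sub, map_neg,
      map_smul, smul_eq_mul]
    linear_combination (-1:ℂ) * z1 - z2 - (1/2:ℂ) * z3 - (1/2:ℂ) * z4 - z5 - z6 - z7 - z8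
  refine ⟨heq, ?_⟩
  have h3 := nonpos (D₃ (exp f)) (skew D₃ hD₃star)
  have h4 := nonpos (D₄ (exp f)) (skew D₄ hD₄star)
  rw [heq, map_add]
  calc (1/2:ℂ) * (τ (D₃ (exp f) * exp (-f) * D₃ (exp f))
        + τ (D₄ (exp f) * exp (-f) * D₄ (exp f)))
      ≤ (1/2:ℂ) * 0 := by
        apply mul_le_mul_of_nonneg_left (add_nonpos h3 h4)
        norm_num [Complex.le_def]
    _ = 0 := mul_zero _
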